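/- Let x = (x_n) be a nonzero element of ⊕_1 X_n. Then D(x) = sup_n D(x_n) if x_n ≠ 0 for every n, and D(x) = 2 if x_n = 0 for some n. -/

import Mathlib

open scoped ENNReal

namespace Stmt13Aux

set_option linter.unusedSectionVars false

variable {E : ℕ → Type*} [∀ n, NormedAddCommGroup (E n)] [∀ n, NormedSpace ℝ (E n)]

lemma hs_norm (y : lp E 1) : HasSum (fun n => ‖y n‖) ‖y‖ := by
  simpa using lp.hasSum_norm (by norm_num : (0:ℝ) < (1 : ℝ≥0∞).toReal) y

lemma single_norm (n : ℕ) (a : E n) : ‖lp.single 1 n a‖ = ‖a‖ := by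
  have := lp.norm_single (p := 1) (E := E) (by norm_num) n a
  simpa using this

lemma single_add (n : ℕ) (a b : E n) :
    lp.single (E := E) 1 n (a + b) = lp.single 1 n a + lp.single 1 n b := by
  refine lp.ext (funext fun j => ?_)
  by_cases h : j = n
  · subst h; simp [lp.single_apply_self]
  · simp [lp.single_apply_ne 1 n _ h]

lemma summ (g : ∀ n, E n →L[ℝ] ℝ) (hg : ∀ n, ‖g n‖ ≤ 1) (y : lp E 1) :
    Summable fun n => g n (y n) := by
  refine Summable.of_norm_bounded (hs_norm y).summable fun n => ?_
  calc ‖g n (y n)‖ ≤ ‖g n‖ * ‖y n‖ := (g n).le_opNorm _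
    _ ≤ 1 * ‖y n‖ := by gcongr; exact hg n
    _ = ‖y n‖ := one_mul _

/-- The functional on `⊕_1 E_n` built from a family of coordinate functionals of norm `≤ 1`. -/
noncomputable def mk (g : ∀ n, E n →L[ℝ] ℝ) (hg : ∀ n, ‖g n‖ ≤ 1) : lp E 1 →L[ℝ] ℝ :=
  LinearMap.mkContinuous
    { toFun := fun y => ∑' n, g n (y n)
      map_add' := fun y z => by
        have : ∀ n, g n ((y + z) n) = g n (y n) + g n (z n) := fun n => by
          rw [lp.coeFn_add]; simp
        simp only [this]
        exact Summable.tsum_add (summ g hg y) (summ g hg z)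
      map_smul' := fun c y => by
        have : ∀ n, g n ((c • y) n) = c * g n (y n) := fun n => by
          rw [lp.coeFn_smul]; simp
        simp only [this, RingHom.id_apply, smul_eq_mul]
        exact tsum_mul_left }
    1 (fun y => by
      rw [one_mul]
      refine tsum_of_norm_bounded (hs_norm y) fun n => ?_
      calc ‖g n (y n)‖ ≤ ‖g n‖ * ‖y n‖ := (g n).le_opNorm _
        _ ≤ 1 * ‖y n‖ := by gcongr; exact hg n
        _ = ‖y n‖ := one_mul _)

lemma mk_apply (g : ∀ n, E n →L[ℝ] ℝ) (hg : ∀ n, ‖g n‖ ≤ 1) (y : lp E 1) :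
    mk g hg y = ∑' n, g n (y n) := rfl

lemma mk_norm_le (g : ∀ n, E n →L[ℝ] ℝ) (hg : ∀ n, ‖g n‖ ≤ 1) : ‖mk g hg‖ ≤ 1 :=
  LinearMap.mkContinuous_norm_le _ zero_le_one _

lemma mk_single (g : ∀ n, E n →L[ℝ] ℝ) (hg : ∀ n, ‖g n‖ ≤ 1) (n : ℕ) (a : E n) :
    mk g hg (lp.single 1 n a) = g n a := by
  rw [mk_apply]
  have h0 : ∀ m, m ≠ n → g m ((lp.single (E := E) 1 n a) m) = 0 := fun m hm => by
    rw [lp.single_apply_ne 1 n _ hm, map_zero]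
  rw [tsum_eq_single n h0, lp.single_apply_self]

/-- Coordinate restriction of a functional on `⊕_1 E_n`. -/
noncomputable def coord (f : lp E 1 →L[ℝ] ℝ) (n : ℕ) : E n →L[ℝ] ℝ :=
  LinearMap.mkContinuous
    { toFun := fun a => f (lp.single 1 n a)
      map_add' := fun a b => by rw [single_add, map_add]
      map_smul' := fun c a => by
        rw [lp.single_smul, map_smul, RingHom.id_apply, smul_eq_mul] }
    ‖f‖ (fun a => by
      calc ‖f (lp.single 1 n a)‖ ≤ ‖f‖ * ‖lp.single (E := E) 1 n a‖ := f.le_opNorm _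
        _ = ‖f‖ * ‖a‖ := by rw [single_norm])

lemma coord_apply (f : lp E 1 →L[ℝ] ℝ) (n : ℕ) (a : E n) :
    coord f n a = f (lp.single 1 n a) := rfl

lemma coord_norm_le (f : lp E 1 →L[ℝ] ℝ) (n : ℕ) : ‖coord f n‖ ≤ ‖f‖ :=
  LinearMap.mkContinuous_norm_le _ (norm_nonneg f) _

lemma hasSum_coord (f : lp E 1 →L[ℝ] ℝ) (y : lp E 1) :
    HasSum (fun n => coord f n (y n)) (f y) := by
  have := (lp.hasSum_single (E := E) (by norm_num : (1:ℝ≥0∞) ≠ ⊤) y).mapL f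
  simpa [coord_apply] using this

/-- For a support functional of `x`, each coordinate restriction supports `x n`. -/
lemma coord_support {x : lp E 1} (f : lp E 1 →L[ℝ] ℝ) (hf1 : ‖f‖ = 1)
    (hfx : f x = ‖x‖) (n : ℕ) : coord f n (x n) = ‖x n‖ := by
  have hle : ∀ m, coord f m (x m) ≤ ‖x m‖ := fun m => by
    calc coord f m (x m) ≤ ‖coord f m (x m)‖ := le_abs_self _
      _ ≤ ‖coord f m‖ * ‖x m‖ := (coord f m).le_opNorm _
      _ ≤ 1 * ‖x m‖ := by gcongr; exact hf1 ▸ coord_norm_le f m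
      _ = ‖x m‖ := one_mul _
  have hsum : HasSum (fun m => ‖x m‖ - coord f m (x m)) 0 := by
    have := (hs_norm x).sub (hasSum_coord f x)
    rwa [hfx, sub_self] at this
  have h1 : ‖x n‖ - coord f n (x n) ≤ 0 :=
    le_hasSum hsum n (fun j _ => sub_nonneg.2 (hle j))
  linarith [hle n]

end Stmt13Aux
namespace Stmt13Aux

variable {E : ℕ → Type*} [∀ n, NormedAddCommGroup (E n)] [∀ n, NormedSpace ℝ (E n)]

/-- A functional of norm `≤ 1` attaining `‖x‖` at `x ≠ 0` has norm `1`. -/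
lemma norm_one_of_support {x : lp E 1} (hx : x ≠ 0) (F : lp E 1 →L[ℝ] ℝ)
    (h1 : ‖F‖ ≤ 1) (h2 : F x = ‖x‖) : ‖F‖ = 1 := by
  refine le_antisymm h1 ?_
  have hxpos : (0:ℝ) < ‖x‖ := norm_pos_iff.mpr hx
  have : ‖x‖ ≤ ‖F‖ * ‖x‖ := by
    calc ‖x‖ = F x := h2.symm
      _ ≤ ‖F x‖ := le_abs_self _
      _ ≤ ‖F‖ * ‖x‖ := F.le_opNorm x
  nlinarith

lemma mk_mem_S {x : lp E 1} (hx : x ≠ 0) (g : ∀ n, E n →L[ℝ] ℝ)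
    (hg : ∀ n, ‖g n‖ ≤ 1) (hgx : ∀ n, g n (x n) = ‖x n‖) :
    ‖mk g hg‖ = 1 ∧ mk g hg x = ‖x‖ := by
  have hval : mk g hg x = ‖x‖ := by
    rw [mk_apply]
    have : HasSum (fun n => g n (x n)) ‖x‖ := by
      have := hs_norm x
      simpa [hgx] using this
    exact this.tsum_eq
  exact ⟨norm_one_of_support hx _ (mk_norm_le g hg) hval, hval⟩

lemma S_bounded (x : lp E 1) :
    Bornology.IsBounded {f : (lp E 1) →L[ℝ] ℝ | ‖f‖ = 1 ∧ f x = ‖x‖} := by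
  refine (Metric.isBounded_iff_subset_closedBall 0).2 ⟨1, fun f hf => ?_⟩
  simp only [Metric.mem_closedBall, dist_zero_right]
  exact le_of_eq hf.1

lemma J_bounded {n : ℕ} (a : E n) :
    Bornology.IsBounded {g : E n →L[ℝ] ℝ | ‖g‖ = 1 ∧ g a = ‖a‖} := by
  refine (Metric.isBounded_iff_subset_closedBall 0).2 ⟨1, fun f hf => ?_⟩
  simp only [Metric.mem_closedBall, dist_zero_right]
  exact le_of_eq hf.1

end Stmt13Aux

open Stmt13Aux in
theorem stmt13 (E : ℕ → Type*) [∀ n, NormedAddCommGroup (E n)]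
    [∀ n, NormedSpace ℝ (E n)] [∀ n, Nontrivial (E n)]
    (x : lp E 1) (hx : x ≠ 0) :
    ((∀ n, x n ≠ 0) →
      Metric.diam {f : (lp E 1) →L[ℝ] ℝ | ‖f‖ = 1 ∧ f x = ‖x‖} =
        ⨆ n, Metric.diam {g : E n →L[ℝ] ℝ | ‖g‖ = 1 ∧ g (x n) = ‖x n‖}) ∧
    ((∃ n, x n = 0) →
      Metric.diam {f : (lp E 1) →L[ℝ] ℝ | ‖f‖ = 1 ∧ f x = ‖x‖} = 2) := by
  classical
  set S : Set ((lp E 1) →L[ℝ] ℝ) := {f | ‖f‖ = 1 ∧ f x = ‖x‖} with hS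
  -- base family of coordinate support functionals
  have hbase : ∀ n, ∃ g : E n →L[ℝ] ℝ, ‖g‖ ≤ 1 ∧ g (x n) = ‖x n‖ := fun n =>
    exists_dual_vector'' ℝ (x n)
  choose base hbase1 hbase2 using hbase
  constructor
  · -- all coordinates nonzero
    intro hall
    set D : ℕ → ℝ := fun n => Metric.diam {g : E n →L[ℝ] ℝ | ‖g‖ = 1 ∧ g (x n) = ‖x n‖}
      with hD
    have hDnn : ∀ n, 0 ≤ D n := fun n => Metric.diam_nonneg
    have hDbdd : BddAbove (Set.range D) := by
      refine ⟨2, fun r ⟨n, hn⟩ => ?_⟩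
      rw [← hn, hD]
      refine Metric.diam_le_of_forall_dist_le (by norm_num) fun f hf g hg => ?_
      rw [dist_eq_norm]
      calc ‖f - g‖ ≤ ‖f‖ + ‖g‖ := norm_sub_le _ _
        _ = 2 := by rw [hf.1, hg.1]; norm_num
    have hDle : ∀ n, D n ≤ ⨆ m, D m := fun n => le_ciSup hDbdd n
    refine le_antisymm ?_ ?_
    · -- diam S ≤ sup D
      refine Metric.diam_le_of_forall_dist_le
        (Real.iSup_nonneg hDnn) fun f hf g hg => ?_
      rw [dist_eq_norm]
      refine ContinuousLinearMap.opNorm_le_bound _ (Real.iSup_nonneg hDnn) fun y => ?_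
      have hfy := hasSum_coord f y
      have hgy := hasSum_coord g y
      have hsub : HasSum (fun n => coord f n (y n) - coord g n (y n)) (f y - g y) :=
        hfy.sub hgy
      have key : ∀ n, ‖coord f n (y n) - coord g n (y n)‖ ≤ (⨆ m, D m) * ‖y n‖ := by
        intro n
        have hfn : coord f n ∈ {g : E n →L[ℝ] ℝ | ‖g‖ = 1 ∧ g (x n) = ‖x n‖} := by
          have hv := coord_support f hf.1 hf.2 n
          refine ⟨?_, hv⟩
          refine le_antisymm (hf.1 ▸ coord_norm_le f n) ?_
          have hxn : (0:ℝ) < ‖x n‖ := norm_pos_iff.mpr (hall n)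
          have : ‖x n‖ ≤ ‖coord f n‖ * ‖x n‖ := by
            calc ‖x n‖ = coord f n (x n) := hv.symm
              _ ≤ ‖coord f n (x n)‖ := le_abs_self _
              _ ≤ ‖coord f n‖ * ‖x n‖ := (coord f n).le_opNorm _
          nlinarith
        have hgn : coord g n ∈ {g' : E n →L[ℝ] ℝ | ‖g'‖ = 1 ∧ g' (x n) = ‖x n‖} := by
          have hv := coord_support g hg.1 hg.2 n
          refine ⟨?_, hv⟩
          refine le_antisymm (hg.1 ▸ coord_norm_le g n) ?_
          have hxn : (0:ℝ) < ‖x n‖ := norm_pos_iff.mpr (hall n)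
          have : ‖x n‖ ≤ ‖coord g n‖ * ‖x n‖ := by
            calc ‖x n‖ = coord g n (x n) := hv.symm
              _ ≤ ‖coord g n (x n)‖ := le_abs_self _
              _ ≤ ‖coord g n‖ * ‖x n‖ := (coord g n).le_opNorm _
          nlinarith
        have hd : ‖coord f n - coord g n‖ ≤ D n := by
          have := Metric.dist_le_diam_of_mem (J_bounded (x n)) hfn hgn
          rwa [dist_eq_norm] at this
        calc ‖coord f n (y n) - coord g n (y n)‖
            = ‖(coord f n - coord g n) (y n)‖ := by simp
          _ ≤ ‖coord f n - coord g n‖ * ‖y n‖ :=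
              (coord f n - coord g n).le_opNorm _
          _ ≤ (⨆ m, D m) * ‖y n‖ :=
              mul_le_mul_of_nonneg_right (hd.trans (hDle n)) (norm_nonneg _)
      have hbd : HasSum (fun n => (⨆ m, D m) * ‖y n‖) ((⨆ m, D m) * ‖y‖) :=
        (hs_norm y).mul_left _
      have := tsum_of_norm_bounded hbd key
      rw [hsub.tsum_eq] at this
      simpa using this
    · -- sup D ≤ diam S
      refine ciSup_le fun n => ?_
      refine Metric.diam_le_of_forall_dist_le Metric.diam_nonneg fun ga hga gb hgb => ?_
      -- build full support functionals extending ga, gb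
      have hga1 : ∀ m, ‖Function.update base n ga m‖ ≤ 1 := fun m => by
        rcases eq_or_ne m n with rfl | h
        · rw [Function.update_self]; exact le_of_eq hga.1
        · rw [Function.update_of_ne h]; exact hbase1 m
      have hgb1 : ∀ m, ‖Function.update base n gb m‖ ≤ 1 := fun m => by
        rcases eq_or_ne m n with rfl | h
        · rw [Function.update_self]; exact le_of_eq hgb.1
        · rw [Function.update_of_ne h]; exact hbase1 m
      have hga2 : ∀ m, Function.update base n ga m (x m) = ‖x m‖ := fun m => by
        rcases eq_or_ne m n with rfl | h
        · rw [Function.update_self]; exact hga.2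
        · rw [Function.update_of_ne h]; exact hbase2 m
      have hgb2 : ∀ m, Function.update base n gb m (x m) = ‖x m‖ := fun m => by
        rcases eq_or_ne m n with rfl | h
        · rw [Function.update_self]; exact hgb.2
        · rw [Function.update_of_ne h]; exact hbase2 m
      have hFa := mk_mem_S hx _ hga1 hga2
      have hFb := mk_mem_S hx _ hgb1 hgb2
      have hdiff : ‖ga - gb‖ ≤ ‖mk _ hga1 - mk _ hgb1‖ := by
        refine ContinuousLinearMap.opNorm_le_bound _ (norm_nonneg _) fun a => ?_
        have : (ga - gb) a = (mk _ hga1 - mk _ hgb1) (lp.single 1 n a) := by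
          simp [mk_single, Function.update_self]
        rw [this]
        calc ‖(mk _ hga1 - mk _ hgb1) (lp.single 1 n a)‖
            ≤ ‖mk _ hga1 - mk _ hgb1‖ * ‖lp.single (E := E) 1 n a‖ :=
              ContinuousLinearMap.le_opNorm _ _
          _ = ‖mk _ hga1 - mk _ hgb1‖ * ‖a‖ := by rw [single_norm]
      calc dist ga gb = ‖ga - gb‖ := dist_eq_norm _ _
        _ ≤ ‖mk _ hga1 - mk _ hgb1‖ := hdiff
        _ = dist (mk _ hga1) (mk _ hgb1) := (dist_eq_norm _ _).symm
        _ ≤ Metric.diam S := Metric.dist_le_diam_of_mem (S_bounded x) hFa hFb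
  · -- some coordinate zero
    rintro ⟨m, hm⟩
    obtain ⟨v, hv⟩ := exists_ne (0 : E m)
    obtain ⟨u, hu1, hu2⟩ := exists_dual_vector ℝ v (norm_ne_zero_iff.mpr hv)
    have hup : ∀ k, ‖Function.update base m u k‖ ≤ 1 := fun k => by
      rcases eq_or_ne k m with rfl | h
      · rw [Function.update_self]; exact le_of_eq hu1
      · rw [Function.update_of_ne h]; exact hbase1 k
    have hun : ∀ k, ‖Function.update base m (-u) k‖ ≤ 1 := fun k => by
      rcases eq_or_ne k m with rfl | h
      · rw [Function.update_self, norm_neg]; exact le_of_eq hu1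
      · rw [Function.update_of_ne h]; exact hbase1 k
    have hup2 : ∀ k, Function.update base m u k (x k) = ‖x k‖ := fun k => by
      rcases eq_or_ne k m with rfl | h
      · rw [Function.update_self, hm, map_zero, norm_zero]
      · rw [Function.update_of_ne h]; exact hbase2 k
    have hun2 : ∀ k, Function.update base m (-u) k (x k) = ‖x k‖ := fun k => by
      rcases eq_or_ne k m with rfl | h
      · rw [Function.update_self, hm, map_zero, norm_zero]
      · rw [Function.update_of_ne h]; exact hbase2 k
    have hFp := mk_mem_S hx _ hup hup2
    have hFn := mk_mem_S hx _ hun hun2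
    refine le_antisymm ?_ ?_
    · refine Metric.diam_le_of_forall_dist_le (by norm_num) fun f hf g hg => ?_
      rw [dist_eq_norm]
      calc ‖f - g‖ ≤ ‖f‖ + ‖g‖ := norm_sub_le _ _
        _ = 2 := by rw [hf.1, hg.1]; norm_num
    · have hu2' : u v = ‖v‖ := by exact_mod_cast hu2
      have hvpos : (0:ℝ) < ‖v‖ := norm_pos_iff.mpr hv
      have heq : (mk _ hup - mk _ hun) (lp.single 1 m v) = 2 * ‖v‖ := by
        simp only [ContinuousLinearMap.sub_apply, mk_single, Function.update_self,
          ContinuousLinearMap.neg_apply, hu2']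
        ring
      have hkey : (2:ℝ) * ‖v‖ ≤ ‖mk _ hup - mk _ hun‖ * ‖v‖ := by
        calc (2:ℝ) * ‖v‖ = ‖(mk _ hup - mk _ hun) (lp.single 1 m v)‖ := by
              rw [heq, Real.norm_of_nonneg (by positivity)]
          _ ≤ ‖mk _ hup - mk _ hun‖ * ‖lp.single (E := E) 1 m v‖ :=
              ContinuousLinearMap.le_opNorm _ _
          _ = ‖mk _ hup - mk _ hun‖ * ‖v‖ := by rw [single_norm]
      have hdist : (2:ℝ) ≤ dist (mk _ hup) (mk _ hun) := by
        rw [dist_eq_norm]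
        nlinarith
      exact hdist.trans (Metric.dist_le_diam_of_mem (S_bounded x) hFp hFn)
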